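/- The Grigorchuk group self-similar action on X = {x,y} is contracting with nucleus 𝒩 = {e, a, b, c, d}: for every g ∈ G there is n such that g|_v ∈ {e,a,b,c,d} for all words v with |v| ≥ n. -/

import Mathlib

/-- The generator `a` of the Grigorchuk group, acting on words over `X = {x,y}`
(encoded as `Bool` with `x = false`, `y = true`): `a·(xw) = yw`, `a·(yw) = xw`. -/
def grigA : List Bool → List Bool
  | [] => []
  | x :: w => (!x) :: w

mutual
/-- The generator `b`: `b·(xw) = x(a·w)`, `b·(yw) = y(c·w)`. -/
def grigB : List Bool → List Bool
  | [] => []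
  | false :: w => false :: grigA w
  | true :: w => true :: grigC w
/-- The generator `c`: `c·(xw) = x(a·w)`, `c·(yw) = y(d·w)`. -/
def grigC : List Bool → List Bool
  | [] => []
  | false :: w => false :: grigA w
  | true :: w => true :: grigD w
/-- The generator `d`: `d·(xw) = xw`, `d·(yw) = y(b·w)`. -/
def grigD : List Bool → List Bool
  | [] => []
  | false :: w => false :: w
  | true :: w => true :: grigB w
end

/-- The restriction `f|_x` of a (length- and prefix-preserving) transformation of words:
`f|_x (w)` is the tail of `f (x :: w)`. -/
def restr (f : List Bool → List Bool) (x : Bool) : List Bool → List Bool :=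
  fun w => (f (x :: w)).tail

/-- The restriction `f|_v` of a transformation of words to a word `v`. -/
def restrW : (List Bool → List Bool) → List Bool → (List Bool → List Bool)
  | f, [] => f
  | f, x :: v => restrW (restr f x) v

/-! ### Auxiliary material -/

/-- The nucleus. -/
def NS : Set (List Bool → List Bool) := {id, grigA, grigB, grigC, grigD}

lemma mid : id ∈ NS := Or.inl rfl
lemma ma : grigA ∈ NS := Or.inr (Or.inl rfl)
lemma mb : grigB ∈ NS := Or.inr (Or.inr (Or.inl rfl))
lemma mc : grigC ∈ NS := Or.inr (Or.inr (Or.inr (Or.inl rfl)))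
lemma md : grigD ∈ NS := Or.inr (Or.inr (Or.inr (Or.inr rfl)))

lemma mem_of_eq {f g : List Bool → List Bool} (h : f = g) (hg : g ∈ NS) : f ∈ NS := h ▸ hg

lemma aa (w : List Bool) : grigA (grigA w) = w := by
  cases w <;> simp [grigA]

lemma inv3 (w : List Bool) :
    grigB (grigB w) = w ∧ grigC (grigC w) = w ∧ grigD (grigD w) = w := by
  induction w with
  | nil => simp [grigB, grigC, grigD]
  | cons x w ih => cases x <;> simp [grigB, grigC, grigD, aa, ih.1, ih.2.1, ih.2.2]

lemma bc3 (w : List Bool) :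
    grigB (grigC w) = grigD w ∧ grigC (grigD w) = grigB w ∧ grigD (grigB w) = grigC w := by
  induction w with
  | nil => simp [grigB, grigC, grigD]
  | cons x w ih => cases x <;> simp [grigB, grigC, grigD, aa, ih.1, ih.2.1, ih.2.2]

lemma cb3 (w : List Bool) :
    grigC (grigB w) = grigD w ∧ grigD (grigC w) = grigB w ∧ grigB (grigD w) = grigC w := by
  induction w with
  | nil => simp [grigB, grigC, grigD]
  | cons x w ih => cases x <;> simp [grigB, grigC, grigD, aa, ih.1, ih.2.1, ih.2.2]

lemma haa : grigA ∘ grigA = id := funext fun w => aa w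
lemma hbb : grigB ∘ grigB = id := funext fun w => (inv3 w).1
lemma hcc : grigC ∘ grigC = id := funext fun w => (inv3 w).2.1
lemma hdd : grigD ∘ grigD = id := funext fun w => (inv3 w).2.2
lemma hbc : grigB ∘ grigC = grigD := funext fun w => (bc3 w).1
lemma hcd : grigC ∘ grigD = grigB := funext fun w => (bc3 w).2.1
lemma hdb : grigD ∘ grigB = grigC := funext fun w => (bc3 w).2.2
lemma hcb : grigC ∘ grigB = grigD := funext fun w => (cb3 w).1
lemma hdc : grigD ∘ grigC = grigB := funext fun w => (cb3 w).2.1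
lemma hbd : grigB ∘ grigD = grigC := funext fun w => (cb3 w).2.2

lemma restr_mem_NS {f : List Bool → List Bool} (hf : f ∈ NS) (x : Bool) : restr f x ∈ NS := by
  rcases hf with rfl | rfl | rfl | rfl | rfl <;> cases x
  · exact mem_of_eq (funext fun w => by simp [restr]) mid
  · exact mem_of_eq (funext fun w => by simp [restr]) mid
  · exact mem_of_eq (funext fun w => by simp [restr, grigA]) mid
  · exact mem_of_eq (funext fun w => by simp [restr, grigA]) mid
  · exact mem_of_eq (funext fun w => by simp [restr, grigB]) ma
  · exact mem_of_eq (funext fun w => by simp [restr, grigB]) mc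
  · exact mem_of_eq (funext fun w => by simp [restr, grigC]) ma
  · exact mem_of_eq (funext fun w => by simp [restr, grigC]) md
  · exact mem_of_eq (funext fun w => by simp [restr, grigD]) mid
  · exact mem_of_eq (funext fun w => by simp [restr, grigD]) mb

lemma restrW_cons (f : List Bool → List Bool) (x : Bool) (v : List Bool) :
    restrW f (x :: v) = restrW (restr f x) v := rfl

lemma restrW_mem_NS {f : List Bool → List Bool} (hf : f ∈ NS) :
    ∀ v : List Bool, restrW f v ∈ NS := by
  intro v
  induction v generalizing f with
  | nil => exact hf
  | cons x v ih => exact ih (restr_mem_NS hf x)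

lemma restrW_append (f : List Bool → List Bool) (u v : List Bool) :
    restrW f (u ++ v) = restrW (restrW f u) v := by
  induction u generalizing f with
  | nil => rfl
  | cons x u ih => exact ih (restr f x)

/-- A function is "sequential": the image of `x :: w` is a cons whose head depends
only on `x`. -/
def GoodF (f : List Bool → List Bool) : Prop :=
  ∀ x : Bool, ∃ y : Bool, ∀ w, f (x :: w) = y :: restr f x w

lemma good_comp {f g : Function.End (List Bool)} (hf : GoodF f) (hg : GoodF g) :
    GoodF (f * g) := by
  intro x
  obtain ⟨y, hy⟩ := hg x
  obtain ⟨z, hz⟩ := hf y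
  refine ⟨z, fun w => ?_⟩
  show f (g (x :: w)) = z :: (f (g (x :: w))).tail
  rw [hy, hz]
  rfl

def grigS : Set (Function.End (List Bool)) := {grigA, grigB, grigC, grigD}

lemma good_closure : ∀ f ∈ Submonoid.closure grigS, GoodF f := by
  intro f hf
  induction hf using Submonoid.closure_induction with
  | mem f hfm =>
    rcases hfm with rfl | rfl | rfl | rfl
    · exact fun x => ⟨!x, fun w => by simp [grigA, restr]⟩
    · exact fun x => ⟨x, fun w => by cases x <;> simp [grigB, restr]⟩
    · exact fun x => ⟨x, fun w => by cases x <;> simp [grigC, restr]⟩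
    · exact fun x => ⟨x, fun w => by cases x <;> simp [grigD, restr]⟩
  | one => exact fun x => ⟨x, fun w => rfl⟩
  | mul f g hfc hgc ihf ihg => exact good_comp ihf ihg

lemma restr_comp_eq {f g : Function.End (List Bool)} {x y : Bool}
    (hy : ∀ w, g (x :: w) = y :: restr g x w) :
    restr (f * g) x = Mul.mul (α := Function.End (List Bool)) (restr f y) (restr g x) := by
  funext w
  show (f (g (x :: w))).tail = (f (y :: restr g x w)).tail
  rw [hy]

lemma one_mem_cl : (1 : Function.End (List Bool)) ∈ Submonoid.closure grigS :=
  Submonoid.one_mem _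

lemma closure_restr : ∀ f ∈ Submonoid.closure grigS, ∀ x : Bool,
    restr f x ∈ Submonoid.closure grigS := by
  intro f hf
  induction hf using Submonoid.closure_induction with
  | mem f hfm =>
    intro x
    have hN : restr f x ∈ NS := by
      apply restr_mem_NS _ x
      rcases hfm with rfl | rfl | rfl | rfl
      exacts [ma, mb, mc, md]
    rcases hN with h | h | h | h | h <;> rw [h]
    · exact one_mem_cl
    · exact Submonoid.subset_closure (Or.inl rfl)
    · exact Submonoid.subset_closure (Or.inr (Or.inl rfl))
    · exact Submonoid.subset_closure (Or.inr (Or.inr (Or.inl rfl)))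
    · exact Submonoid.subset_closure (Or.inr (Or.inr (Or.inr rfl)))
  | one =>
    intro x
    have h1 : restr (1 : Function.End (List Bool)) x = (1 : Function.End (List Bool)) :=
      funext fun w => rfl
    rw [h1]; exact one_mem_cl
  | mul f g hfc hgc ihf ihg =>
    intro x
    obtain ⟨y, hy⟩ := good_closure g hgc x
    rw [restr_comp_eq hy]
    exact mul_mem (ihf y) (ihg x)

lemma decomp : ∀ (v : List Bool) (f g : Function.End (List Bool)),
    f ∈ Submonoid.closure grigS → g ∈ Submonoid.closure grigS →
    ∃ u : List Bool, u.length = v.length ∧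
      restrW (f * g) v = restrW f u ∘ restrW g v := by
  intro v
  induction v with
  | nil => exact fun f g _ _ => ⟨[], rfl, rfl⟩
  | cons x v ih =>
    intro f g hf hg
    obtain ⟨y, hy⟩ := good_closure g hg x
    obtain ⟨u, hu, heq⟩ := ih (restr f y) (restr g x)
      (closure_restr f hf y) (closure_restr g hg x)
    refine ⟨y :: u, by simp [hu], ?_⟩
    show restrW (restr (f * g) x) v = restrW (restr f y) u ∘ restrW (restr g x) v
    rw [restr_comp_eq hy]
    exact heq

lemma amix {f : List Bool → List Bool} (h0 : restr f false ∈ NS) (h1 : restr f true ∈ NS) :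
    ∀ t : List Bool, t ≠ [] → restrW f t ∈ NS := by
  rintro (_ | ⟨x, t⟩) ht
  · exact absurd rfl ht
  · cases x
    · exact restrW_mem_NS h0 t
    · exact restrW_mem_NS h1 t

lemma nn_ab : ∀ t : List Bool, t ≠ [] → restrW (grigA ∘ grigB) t ∈ NS :=
  amix (mem_of_eq (funext fun w => by simp [restr, grigA, grigB]) ma)
    (mem_of_eq (funext fun w => by simp [restr, grigA, grigB]) mc)

lemma nn_ac : ∀ t : List Bool, t ≠ [] → restrW (grigA ∘ grigC) t ∈ NS :=
  amix (mem_of_eq (funext fun w => by simp [restr, grigA, grigC]) ma)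
    (mem_of_eq (funext fun w => by simp [restr, grigA, grigC]) md)

lemma nn_ad : ∀ t : List Bool, t ≠ [] → restrW (grigA ∘ grigD) t ∈ NS :=
  amix (mem_of_eq (funext fun w => by simp [restr, grigA, grigD]) mid)
    (mem_of_eq (funext fun w => by simp [restr, grigA, grigD]) mb)

lemma nn_ba : ∀ t : List Bool, t ≠ [] → restrW (grigB ∘ grigA) t ∈ NS :=
  amix (mem_of_eq (funext fun w => by simp [restr, grigA, grigB]) mc)
    (mem_of_eq (funext fun w => by simp [restr, grigA, grigB]) ma)

lemma nn_ca : ∀ t : List Bool, t ≠ [] → restrW (grigC ∘ grigA) t ∈ NS :=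
  amix (mem_of_eq (funext fun w => by simp [restr, grigA, grigC]) md)
    (mem_of_eq (funext fun w => by simp [restr, grigA, grigC]) ma)

lemma nn_da : ∀ t : List Bool, t ≠ [] → restrW (grigD ∘ grigA) t ∈ NS :=
  amix (mem_of_eq (funext fun w => by simp [restr, grigA, grigD]) mb)
    (mem_of_eq (funext fun w => by simp [restr, grigA, grigD]) mid)

lemma NN {p q : List Bool → List Bool} (hp : p ∈ NS) (hq : q ∈ NS)
    (t : List Bool) (ht : t ≠ []) : restrW (p ∘ q) t ∈ NS := by
  rcases hp with rfl | rfl | rfl | rfl | rfl <;>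
    rcases hq with rfl | rfl | rfl | rfl | rfl <;>
    (try simp only [Function.comp_id, Function.id_comp]) <;>
    first
    | exact restrW_mem_NS mid t
    | exact restrW_mem_NS ma t
    | exact restrW_mem_NS mb t
    | exact restrW_mem_NS mc t
    | exact restrW_mem_NS md t
    | (rw [haa]; exact restrW_mem_NS mid t)
    | (rw [hbb]; exact restrW_mem_NS mid t)
    | (rw [hcc]; exact restrW_mem_NS mid t)
    | (rw [hdd]; exact restrW_mem_NS mid t)
    | (rw [hbc]; exact restrW_mem_NS md t)
    | (rw [hcd]; exact restrW_mem_NS mb t)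
    | (rw [hdb]; exact restrW_mem_NS mc t)
    | (rw [hcb]; exact restrW_mem_NS md t)
    | (rw [hdc]; exact restrW_mem_NS mb t)
    | (rw [hbd]; exact restrW_mem_NS mc t)
    | exact nn_ab t ht
    | exact nn_ac t ht
    | exact nn_ad t ht
    | exact nn_ba t ht
    | exact nn_ca t ht
    | exact nn_da t ht

/-- The Grigorchuk group self-similar action on `X = {x,y}` is contracting with nucleus
`𝒩 = {e, a, b, c, d}`: for every `g` in the group generated by `a, b, c, d` there is
`n` such that `g|_v ∈ {e, a, b, c, d}` for all words `v` with `|v| ≥ n`. -/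
theorem grigorchuk_contracting :
    ∀ f ∈ Submonoid.closure ({grigA, grigB, grigC, grigD} : Set (Function.End (List Bool))),
      ∃ n : ℕ, ∀ v : List Bool, n ≤ v.length →
        restrW f v ∈ ({id, grigA, grigB, grigC, grigD} : Set (List Bool → List Bool)) := by
  intro f hf
  induction hf using Submonoid.closure_induction with
  | mem f hfm =>
    refine ⟨0, fun v _ => restrW_mem_NS ?_ v⟩
    rcases hfm with rfl | rfl | rfl | rfl
    exacts [ma, mb, mc, md]
  | one => exact ⟨0, fun v _ => restrW_mem_NS mid v⟩
  | mul f g hfc hgc ihf ihg =>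
    obtain ⟨m, hm⟩ := ihf
    obtain ⟨n, hn⟩ := ihg
    refine ⟨max m n + 1, fun v hv => ?_⟩
    set k := max m n with hk
    have hkle : k ≤ v.length := le_trans (Nat.le_succ k) hv
    have htake : (v.take k).length = k := by
      rw [List.length_take]; exact min_eq_left hkle
    have hdrop : v.drop k ≠ [] := by
      have : 0 < (v.drop k).length := by
        rw [List.length_drop]; omega
      exact List.ne_nil_of_length_pos this
    obtain ⟨u, hu, heq⟩ := decomp (v.take k) f g hfc hgc
    have hsplit : v = v.take k ++ v.drop k := (List.take_append_drop k v).symm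
    rw [hsplit, restrW_append (f * g) _ _, heq]
    have hpN : restrW f u ∈ NS := hm u (by rw [hu, htake]; exact le_max_left m n)
    have hqN : restrW g (v.take k) ∈ NS := hn _ (by rw [htake]; exact le_max_right m n)
    exact NN hpN hqN _ hdrop
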